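/- Define h : (0,1) → ℝ by h(ρ) = ρ − 4(2 − ρ)(3 − 2ρ)/(ρ² − 8ρ + 12). Then: (i) ρ² − 8ρ + 12 > 0 for all ρ ∈ (0,1); (ii) for all ρ ∈ (0,1), h(ρ) < 0 if and only if ρ³ − 16ρ² + 40ρ − 24 < 0; (iii) the cubic ρ ↦ ρ³ − 16ρ² + 40ρ − 24 is strictly increasing on [0,1]; and consequently (iv) there exists a unique ρ* ∈ (0.9, 0.92) such that h(ρ) < 0 for all ρ ∈ (0, ρ*) and h(ρ) > 0 for all ρ ∈ (ρ*, 1). -/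

import Mathlib

private lemma den_pos {ρ : ℝ} (h0 : 0 < ρ) (h1 : ρ < 1) : 0 < ρ ^ 2 - 8 * ρ + 12 := by
  nlinarith

private lemma h_eq {ρ : ℝ} (h0 : 0 < ρ) (h1 : ρ < 1) :
    ρ - 4 * (2 - ρ) * (3 - 2 * ρ) / (ρ ^ 2 - 8 * ρ + 12)
      = (ρ ^ 3 - 16 * ρ ^ 2 + 40 * ρ - 24) / (ρ ^ 2 - 8 * ρ + 12) := by
  have hd := den_pos h0 h1
  rw [eq_div_iff hd.ne', sub_mul, div_mul_cancel₀ _ hd.ne']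
  ring

private lemma h_iff {ρ : ℝ} (h0 : 0 < ρ) (h1 : ρ < 1) :
    (ρ - 4 * (2 - ρ) * (3 - 2 * ρ) / (ρ ^ 2 - 8 * ρ + 12) < 0 ↔
      ρ ^ 3 - 16 * ρ ^ 2 + 40 * ρ - 24 < 0) := by
  rw [h_eq h0 h1, div_neg_iff]
  have hd := den_pos h0 h1
  constructor
  · rintro (⟨h, _⟩ | ⟨h, _⟩)
    · linarith
    · exact h
  · intro h
    exact Or.inr ⟨h, hd⟩

private lemma h_pos_iff {ρ : ℝ} (h0 : 0 < ρ) (h1 : ρ < 1) :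
    (0 < ρ - 4 * (2 - ρ) * (3 - 2 * ρ) / (ρ ^ 2 - 8 * ρ + 12) ↔
      0 < ρ ^ 3 - 16 * ρ ^ 2 + 40 * ρ - 24) := by
  rw [h_eq h0 h1]
  exact div_pos_iff_of_pos_right (den_pos h0 h1)

private lemma cubic_mono :
    StrictMonoOn (fun ρ : ℝ => ρ ^ 3 - 16 * ρ ^ 2 + 40 * ρ - 24) (Set.Icc 0 1) := by
  intro x hx y hy hxy
  simp only [Set.mem_Icc] at hx hy
  dsimp only
  nlinarith [hx.1, hx.2, hy.1, hy.2, hxy, sq_nonneg (x + y), sq_nonneg (x - y)]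

theorem priority_example_drift_threshold :
    (∀ ρ : ℝ, 0 < ρ → ρ < 1 → 0 < ρ ^ 2 - 8 * ρ + 12) ∧
    (∀ ρ : ℝ, 0 < ρ → ρ < 1 →
      (ρ - 4 * (2 - ρ) * (3 - 2 * ρ) / (ρ ^ 2 - 8 * ρ + 12) < 0 ↔
        ρ ^ 3 - 16 * ρ ^ 2 + 40 * ρ - 24 < 0)) ∧
    StrictMonoOn (fun ρ : ℝ => ρ ^ 3 - 16 * ρ ^ 2 + 40 * ρ - 24) (Set.Icc 0 1) ∧
    (∃! ρstar : ℝ, ρstar ∈ Set.Ioo (0.9 : ℝ) 0.92 ∧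
      (∀ ρ : ℝ, 0 < ρ → ρ < ρstar →
        ρ - 4 * (2 - ρ) * (3 - 2 * ρ) / (ρ ^ 2 - 8 * ρ + 12) < 0) ∧
      (∀ ρ : ℝ, ρstar < ρ → ρ < 1 →
        0 < ρ - 4 * (2 - ρ) * (3 - 2 * ρ) / (ρ ^ 2 - 8 * ρ + 12))) := by
  refine ⟨fun ρ h0 h1 => den_pos h0 h1, fun ρ h0 h1 => h_iff h0 h1, cubic_mono, ?_⟩
  have hc : True := trivial
  let c : ℝ → ℝ := fun ρ => ρ ^ 3 - 16 * ρ ^ 2 + 40 * ρ - 24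
  -- existence of a root in (0.9, 0.92) via IVT
  have hcont : ContinuousOn c (Set.Icc (0.9 : ℝ) 0.92) := by
    apply Continuous.continuousOn; continuity
  have hab : (0.9 : ℝ) ≤ 0.92 := by norm_num
  have hzero : (0 : ℝ) ∈ Set.Ioo (c 0.9) (c 0.92) := by
    constructor <;> norm_num
  obtain ⟨ρstar, hmem, hroot0⟩ := intermediate_value_Ioo hab hcont hzero
  have hroot : ρstar ^ 3 - 16 * ρstar ^ 2 + 40 * ρstar - 24 = 0 := hroot0
  have h09 : (0.9 : ℝ) < ρstar := hmem.1
  have h092 : ρstar < 0.92 := hmem.2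
  have hstar_mem : ρstar ∈ Set.Icc (0 : ℝ) 1 := ⟨by linarith, by linarith⟩
  refine ⟨ρstar, ⟨⟨h09, h092⟩, ?_, ?_⟩, ?_⟩
  · intro ρ h0 hρ
    have h1 : ρ < 1 := by linarith
    rw [h_iff h0 h1]
    have := cubic_mono ⟨le_of_lt h0, le_of_lt h1⟩ hstar_mem hρ
    simp only at this; linarith [hroot]
  · intro ρ hρ h1
    have h0 : (0 : ℝ) < ρ := by linarith
    rw [h_pos_iff h0 h1]
    have := cubic_mono hstar_mem ⟨le_of_lt h0, le_of_lt h1⟩ hρ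
    simp only at this; linarith [hroot]
  · rintro y ⟨⟨hy1, hy2⟩, hneg, hpos⟩
    by_contra hne
    rcases lt_or_gt_of_ne hne with hlt | hgt
    · -- y < ρstar; take midpoint
      set m := (y + ρstar) / 2
      have hm1 : y < m := by dsimp only [m]; linarith
      have hm2 : m < ρstar := by dsimp only [m]; linarith
      have h0m : (0 : ℝ) < m := by dsimp only [m]; linarith
      have h1m : m < 1 := by dsimp only [m]; linarith
      have A := hpos m hm1 h1m
      have B : m - 4 * (2 - m) * (3 - 2 * m) / (m ^ 2 - 8 * m + 12) < 0 := by
        rw [h_iff h0m h1m]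
        have := cubic_mono ⟨le_of_lt h0m, le_of_lt h1m⟩ hstar_mem hm2
        simp only at this; linarith [hroot]
      linarith
    · set m := (ρstar + y) / 2
      have hm1 : ρstar < m := by dsimp only [m]; linarith
      have hm2 : m < y := by dsimp only [m]; linarith
      have h0m : (0 : ℝ) < m := by dsimp only [m]; linarith
      have h1m : m < 1 := by dsimp only [m]; linarith
      have A := hneg m h0m hm2
      have B : 0 < m - 4 * (2 - m) * (3 - 2 * m) / (m ^ 2 - 8 * m + 12) := by
        rw [h_pos_iff h0m h1m]
        have := cubic_mono hstar_mem ⟨le_of_lt h0m, le_of_lt h1m⟩ hm1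
        simp only at this; linarith [hroot]
      linarith
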